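/- For every x ∈ ℝ and the unit vector ψ₀ = (i, 1, 0)/√2 ∈ ℂ³: Λ_x(ψ₀ψ₀†) = [[(2−x)/4, i(2−x)/4, 0], [−i(2−x)/4, (2−x)/4, 0], [0, 0, x/2]], and its characteristic polynomial satisfies det(t·I₃ − Λ_x(ψ₀ψ₀†)) = t·(t − x/2)·(t − (1 − x/2)) for all t ∈ ℂ; in particular its eigenvalues are 0, x/2 and 1 − x/2, so this state attains the minimum output entropy h(x/2). -/

import Mathlib

open Matrix

/-- The interpolated Landau–Streater/Werner–Holevo channel
`Λ_x(ρ) = (1−x)·ρ + (x/2)·(Tr(ρ)·I₃ − ρᵀ)`. -/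
noncomputable def Lam (x : ℝ) (ρ : Matrix (Fin 3) (Fin 3) ℂ) : Matrix (Fin 3) (Fin 3) ℂ :=
  ((1 : ℂ) - (x : ℂ)) • ρ + ((x : ℂ) / 2) • (ρ.trace • (1 : Matrix (Fin 3) (Fin 3) ℂ) - ρᵀ)

/-- The unit vector `ψ₀ = (i, 1, 0)/√2 ∈ ℂ³`. -/
noncomputable def psi0 : Fin 3 → ℂ :=
  ((1 / Real.sqrt 2 : ℝ) : ℂ) • ![Complex.I, 1, 0]

/-- For the state `ψ₀ = (i,1,0)/√2`: the output `Λ_x(ψ₀ψ₀†)` equals the explicit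
matrix `[[(2−x)/4, i(2−x)/4, 0], [−i(2−x)/4, (2−x)/4, 0], [0, 0, x/2]]`, and its
characteristic polynomial is `t(t − x/2)(t − (1 − x/2))`; in particular the
eigenvalues are `0`, `x/2`, `1 − x/2`, attaining the minimum output entropy. -/
lemma outer_eq : Matrix.vecMulVec psi0 (star psi0) =
    !![1/2, Complex.I/2, 0; -(Complex.I/2), 1/2, 0; 0, 0, 0] := by
  ext i j
  fin_cases i <;> fin_cases j <;>
    simp [Matrix.vecMulVec, psi0, Pi.star_apply, Matrix.vecHead, Matrix.vecTail,
      Complex.ext_iff] <;>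
    field_simp <;>
    rw [Real.sq_sqrt (by norm_num)]

theorem lam_psi0_output (x : ℝ) :
    Lam x (Matrix.vecMulVec psi0 (star psi0)) =
      !![(2 - (x : ℂ)) / 4, Complex.I * (2 - (x : ℂ)) / 4, 0;
         -(Complex.I * (2 - (x : ℂ)) / 4), (2 - (x : ℂ)) / 4, 0;
         0, 0, (x : ℂ) / 2] ∧
    ∀ t : ℂ,
      (t • (1 : Matrix (Fin 3) (Fin 3) ℂ) - Lam x (Matrix.vecMulVec psi0 (star psi0))).det =
        t * (t - (x : ℂ) / 2) * (t - (1 - (x : ℂ) / 2)) := by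
  rw [outer_eq]
  have hL : Lam x !![1/2, Complex.I/2, 0; -(Complex.I/2), 1/2, 0; 0, 0, 0] =
      !![(2 - (x : ℂ)) / 4, Complex.I * (2 - (x : ℂ)) / 4, 0;
         -(Complex.I * (2 - (x : ℂ)) / 4), (2 - (x : ℂ)) / 4, 0;
         0, 0, (x : ℂ) / 2] := by
    ext i j
    fin_cases i <;> fin_cases j <;>
      simp [Lam, Matrix.trace_fin_three, Matrix.transpose, Matrix.one_apply,
        Matrix.vecHead, Matrix.vecTail] <;> ring
  rw [hL]
  refine ⟨rfl, fun t => ?_⟩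
  have : t • (1 : Matrix (Fin 3) (Fin 3) ℂ) -
      !![(2 - (x : ℂ)) / 4, Complex.I * (2 - (x : ℂ)) / 4, 0;
         -(Complex.I * (2 - (x : ℂ)) / 4), (2 - (x : ℂ)) / 4, 0;
         0, 0, (x : ℂ) / 2] =
      !![t - (2 - (x : ℂ)) / 4, -(Complex.I * (2 - (x : ℂ)) / 4), 0;
         Complex.I * (2 - (x : ℂ)) / 4, t - (2 - (x : ℂ)) / 4, 0;
         0, 0, t - (x : ℂ) / 2] := by
    ext i j
    fin_cases i <;> fin_cases j <;>
      simp [Matrix.one_apply, Matrix.vecHead, Matrix.vecTail] <;> ring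
  rw [this, Matrix.det_fin_three]
  simp [Matrix.vecHead, Matrix.vecTail]
  ring_nf
  rw [Complex.I_sq]
  ring
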